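/- Let 0 < ζ ≤ 1/k and let m₁ = (0, ζ, 2ζ, …, (k-1)ζ) ∈ ℝ^k. Then the k-th largest singular value of the k×k Vandermonde matrix V(m₁) (entries (m₁)_j^i for i = 0,…,k-1) satisfies σ_k(V(m₁)) ≤ k!·ζ^{k-1}. -/

import Mathlib

open Matrix Finset

/-- Euclidean norm of a finitely-indexed real vector. -/
noncomputable def e2 {n : Type*} [Fintype n] (x : n → ℝ) : ℝ :=
  Real.sqrt (∑ i, x i ^ 2)

/-- The `j`-th largest singular value of a real matrix, via the Courant–Fischer
max–min characterization: the supremum over `j`-dimensional subspaces of the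
infimum of `‖A x‖₂` over unit vectors `x` in the subspace. -/
noncomputable def sval {m' n : Type*} [Fintype m'] [Fintype n] (A : Matrix m' n ℝ) (j : ℕ) : ℝ :=
  ⨆ V : {V : Submodule ℝ (n → ℝ) // Module.finrank ℝ V = j},
    ⨅ x : {x : n → ℝ // x ∈ V.1 ∧ e2 x = 1}, e2 (A.mulVec x.1)

/-- Hadamard extension: rows indexed by subsets `S ⊆ [n]`, entry `(S, j)` equal
to `∏ i ∈ S, m i j`. -/
noncomputable def hadamardExt {n k : ℕ} (m : Matrix (Fin n) (Fin k) ℝ) :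
    Matrix (Finset (Fin n)) (Fin k) ℝ :=
  Matrix.of fun S j => ∏ i ∈ S, m i j

/-- The `L₂ → L₂` operator norm of a real matrix. -/
noncomputable def opN {m' n : Type*} [Fintype m'] [Fintype n] (A : Matrix m' n ℝ) : ℝ :=
  ⨆ x : {x : n → ℝ // e2 x = 1}, e2 (A.mulVec x.1)

lemma fwdDiff_pow_nat (i : ℕ) :
    fwdDiff 1 (fun x : ℕ => (x : ℝ) ^ i) = fun x : ℕ => ∑ t ∈ range i, (i.choose t : ℝ) * (x:ℝ) ^ t := by
  funext x
  rw [fwdDiff]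
  push_cast
  rw [add_pow]
  rw [Finset.sum_range_succ]
  simp [mul_comm]

lemma fwdDiff_iter_pow_lt (i : ℕ) : ∀ n, i < n → ∀ y : ℕ,
    (fwdDiff 1)^[n] (fun x : ℕ => (x : ℝ) ^ i) y = 0 := by
  induction i using Nat.strong_induction_on with
  | _ i IH =>
    intro n h y
    obtain ⟨m, rfl⟩ : ∃ m, n = m + 1 := Nat.exists_eq_succ_of_ne_zero (by omega)
    rw [Function.iterate_succ_apply, fwdDiff_pow_nat]
    have : (fun x : ℕ => ∑ t ∈ range i, (i.choose t : ℝ) * (x:ℝ) ^ t)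
        = ∑ t ∈ range i, (fun x : ℕ => (i.choose t : ℝ) * (x:ℝ) ^ t) := by
      funext x; simp
    rw [this]
    rw [fwdDiff_iter_finset_sum]
    rw [Finset.sum_apply]
    apply Finset.sum_eq_zero
    intro t ht
    have htl : t < i := mem_range.mp ht
    have : (fun x : ℕ => (i.choose t : ℝ) * (x:ℝ) ^ t)
        = (i.choose t : ℝ) • (fun x : ℕ => (x:ℝ) ^ t) := by funext x; simp [smul_eq_mul]
    rw [this, fwdDiff_iter_const_smul]
    simp [IH t htl m (by omega) y]

lemma fwdDiff_iter_pow_self (n : ℕ) (y : ℕ) :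
    (fwdDiff 1)^[n] (fun x : ℕ => (x : ℝ) ^ n) y = n.factorial := by
  induction n generalizing y with
  | zero => simp
  | succ m IH =>
    rw [Function.iterate_succ_apply, fwdDiff_pow_nat]
    have : (fun x : ℕ => ∑ t ∈ range (m+1), ((m+1).choose t : ℝ) * (x:ℝ) ^ t)
        = ∑ t ∈ range (m+1), (((m+1).choose t : ℝ) • fun x : ℕ => (x:ℝ) ^ t) := by
      funext x; simp [smul_eq_mul]
    rw [this, fwdDiff_iter_finset_sum, Finset.sum_apply]
    rw [Finset.sum_eq_single m]
    · rw [fwdDiff_iter_const_smul]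
      simp only [Pi.smul_apply, smul_eq_mul, IH]
      rw [Nat.choose_succ_self_right]
      push_cast [Nat.factorial_succ]
      ring
    · intro t ht htm
      have : t < m := by have := mem_range.mp ht; omega
      rw [fwdDiff_iter_const_smul]
      simp [fwdDiff_iter_pow_lt t m this y]
    · intro h; simp at h

lemma alt_sum_eq_fwdDiff (n i : ℕ) :
    ∑ j ∈ range (n+1), ((-1:ℝ)^(n-j) * (n.choose j)) * (j:ℝ)^i
      = (fwdDiff 1)^[n] (fun x : ℕ => (x : ℝ)^i) 0 := by
  rw [fwdDiff_iter_eq_sum_shift]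
  apply Finset.sum_congr rfl
  intro j hj
  rw [zsmul_eq_mul]
  push_cast
  ring_nf

lemma e2_nonneg {n : Type*} [Fintype n] (x : n → ℝ) : 0 ≤ e2 x := Real.sqrt_nonneg _

lemma e2_smul {n : Type*} [Fintype n] (a : ℝ) (x : n → ℝ) :
    e2 (a • x) = |a| * e2 x := by
  unfold e2
  rw [← Real.sqrt_sq_eq_abs, ← Real.sqrt_mul (sq_nonneg a)]
  congr 1
  rw [Finset.mul_sum]
  apply Finset.sum_congr rfl
  intro i _
  simp [mul_pow]

theorem stmt12 (k : ℕ) (hk : 1 ≤ k) (ζ : ℝ) (hζ : 0 < ζ) (hζk : ζ ≤ 1 / k) :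
    sval ((Matrix.vandermonde fun j : Fin k => (j : ℕ) * ζ)ᵀ) k ≤
      (Nat.factorial k : ℝ) * ζ ^ (k - 1) := by
  obtain ⟨n, rfl⟩ : ∃ n, k = n + 1 := ⟨k - 1, by omega⟩
  simp only [Nat.add_sub_cancel]
  set A := (Matrix.vandermonde fun j : Fin (n+1) => (j : ℕ) * ζ)ᵀ with hA
  set w : Fin (n+1) → ℝ := fun j => (-1:ℝ)^(n - (j:ℕ)) * (n.choose (j:ℕ)) with hw
  -- the norm of w
  set c : ℝ := e2 w with hc
  have hwlast : w (Fin.last n) ^ 2 = 1 := by simp [hw]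
  have hc1 : 1 ≤ c := by
    rw [hc]
    unfold e2
    rw [show (1:ℝ) = Real.sqrt 1 by simp]
    apply Real.sqrt_le_sqrt
    calc (1:ℝ) = w (Fin.last n) ^ 2 := hwlast.symm
    _ ≤ ∑ i, w i ^ 2 :=
      Finset.single_le_sum (fun i _ => sq_nonneg (w i)) (Finset.mem_univ _)
  have hc0 : 0 < c := lt_of_lt_of_le one_pos hc1
  -- compute A.mulVec w
  have hmul : ∀ i : Fin (n+1),
      A.mulVec w i = ζ^(i:ℕ) * ((fwdDiff 1)^[n] (fun x : ℕ => (x:ℝ)^(i:ℕ)) 0) := by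
    intro i
    rw [← alt_sum_eq_fwdDiff]
    rw [Matrix.mulVec, dotProduct]
    rw [Finset.mul_sum]
    rw [← Fin.sum_univ_eq_sum_range
      (fun j => ζ^(i:ℕ) * (((-1:ℝ)^(n-j) * (n.choose j)) * (j:ℝ)^(i:ℕ)))]
    apply Finset.sum_congr rfl
    intro j _
    simp only [hA, Matrix.transpose_apply, Matrix.vandermonde_apply, hw]
    rw [mul_pow]
    ring
  have hmul_lt : ∀ i : Fin (n+1), (i:ℕ) < n → A.mulVec w i = 0 := by
    intro i hi
    rw [hmul i, fwdDiff_iter_pow_lt _ n hi 0, mul_zero]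
  have hmul_last : A.mulVec w (Fin.last n) = ζ^n * n.factorial := by
    rw [hmul]
    simp [fwdDiff_iter_pow_self n 0]
  -- e2 of A.mulVec w
  have he2 : e2 (A.mulVec w) = ζ^n * n.factorial := by
    unfold e2
    rw [Finset.sum_eq_single (Fin.last n)]
    · rw [hmul_last, Real.sqrt_sq (by positivity)]
    · intro i _ hne
      have : (i:ℕ) < n := by
        have := Fin.is_le i
        have h2 : (i:ℕ) ≠ n := fun h => hne (by ext; simp [h, Fin.last])
        omega
      rw [hmul_lt i this]; ring
    · intro h; simp at h
  -- now bound sval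
  have hbound : (0:ℝ) ≤ ((n+1).factorial : ℝ) * ζ ^ n := by positivity
  apply Real.iSup_le _ hbound
  rintro ⟨V, hV⟩
  have hVtop : V = ⊤ := by
    apply Submodule.eq_top_of_finrank_eq
    rw [hV, Module.finrank_pi]
    simp
  have hx0 : e2 (c⁻¹ • w) = 1 := by
    rw [e2_smul, abs_of_pos (by positivity), ← hc, inv_mul_cancel₀ hc0.ne']
  refine ciInf_le_of_le ⟨0, ?_⟩ ⟨c⁻¹ • w, by show c⁻¹ • w ∈ V; rw [hVtop]; trivial, hx0⟩ ?_
  · rintro x ⟨y, rfl⟩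
    exact e2_nonneg _
  · rw [Matrix.mulVec_smul, e2_smul, he2, abs_of_pos (by positivity)]
    calc c⁻¹ * (ζ^n * n.factorial) ≤ 1 * (ζ^n * n.factorial) := by
          apply mul_le_mul_of_nonneg_right _ (by positivity)
          exact inv_le_one_of_one_le₀ hc1
    _ = ζ^n * n.factorial := by ring
    _ ≤ ((n+1).factorial : ℝ) * ζ ^ n := by
          rw [mul_comm]
          apply mul_le_mul_of_nonneg_right _ (by positivity)
          exact_mod_cast Nat.factorial_le (by omega)
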